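/- Let H_A, H_B, H_C, H_D be finite-dimensional complex Hilbert spaces and U : H_A ⊗ H_B → H_C ⊗ H_D a unitary operator. Then the following are equivalent: (a) there exist linear operators M on H_A and N on H_D with [M ⊗ 1_B, U*(1_C ⊗ N)U] ≠ 0 (i.e., there is a quantum causal influence from A to D through U, in the commutation characterization); (b) there exist projective decompositions {P_A^i} on H_A and {P_D^j} on H_D and indices i, j with [P_A^i ⊗ 1_B, U*(1_C ⊗ P_D^j)U] ≠ 0 (i.e., there is an interference influence from {P_A^i} to {P_D^j}). -/

import Mathlib

open Matrix
open scoped Kronecker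

/-- A projective decomposition on a finite-dimensional complex Hilbert space `H_n`, bundled
with its finite index type: a finite family of orthogonal projections, pairwise orthogonal,
summing to the identity. -/
structure ProjDecompOn (n : Type) [Fintype n] [DecidableEq n] : Type 1 where
  ι : Type
  [fin : Fintype ι]
  P : ι → Matrix n n ℂ
  herm : ∀ i, (P i)ᴴ = P i
  idem : ∀ i, P i * P i = P i
  orth : ∀ i j, i ≠ j → P i * P j = 0
  sum_eq_one : ∑ i, P i = 1

attribute [instance] ProjDecompOn.fin

namespace Stmt2Aux

variable {n : Type} [Fintype n] [DecidableEq n]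

def projSet (n : Type) [Fintype n] [DecidableEq n] : Set (Matrix n n ℂ) :=
  {P | Pᴴ = P ∧ P * P = P}

def boolDecomp (P : Matrix n n ℂ) (hP : P ∈ projSet n) : ProjDecompOn n where
  ι := Bool
  P := fun b => cond b P (1 - P)
  herm := by
    rintro (_|_) <;> simp [conjTranspose_sub, hP.1]
  idem := by
    rintro (_|_) <;>
      simp [mul_sub, sub_mul, hP.2, mul_one, one_mul, sub_sub_cancel]
  orth := by
    rintro (_|_) (_|_) h <;> simp at h <;>
      simp [mul_sub, sub_mul, hP.2]
  sum_eq_one := by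
    rw [Fintype.sum_bool]; simp

lemma Eaa_mem (a : n) : Matrix.single a a (1 : ℂ) ∈ projSet n := by
  constructor
  · ext i j
    simp [Matrix.single, conjTranspose_apply, and_comm]
  · rw [Matrix.single_mul_single_same, one_mul]

lemma E_mem (a b : n) : Matrix.single a b (1 : ℂ) ∈ Submodule.span ℂ (projSet n) := by
  by_cases hab : a = b
  · subst hab
    exact Submodule.subset_span (Eaa_mem a)
  · have hab' : b ≠ a := Ne.symm hab
    have hSP : (1/2 : ℂ) • (Matrix.single a a 1 + Matrix.single a b 1
        + Matrix.single b a 1 + Matrix.single b b 1) ∈ projSet n := by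
      constructor
      · ext i j
        simp only [conjTranspose_apply, Matrix.smul_apply, Matrix.add_apply, Matrix.single,
          of_apply, smul_eq_mul, ite_and]
        split_ifs <;> simp_all <;> ring
      · have h2 : (Matrix.single a a (1:ℂ) + Matrix.single a b 1
            + Matrix.single b a 1 + Matrix.single b b 1)
            * (Matrix.single a a 1 + Matrix.single a b 1
            + Matrix.single b a 1 + Matrix.single b b 1)
            = (Matrix.single a a 1 + Matrix.single a b 1
            + Matrix.single b a 1 + Matrix.single b b 1)
            + (Matrix.single a a 1 + Matrix.single a b 1
            + Matrix.single b a 1 + Matrix.single b b 1) := by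
          simp only [mul_add, add_mul, Matrix.single_mul_single_same,
            Matrix.single_mul_single_of_ne, hab, hab', ne_eq, not_false_eq_true, one_mul]
          abel
        rw [smul_mul_smul_comm, h2, smul_add]
        module
    have hS'P : (1/2 : ℂ) • (Matrix.single a a 1 + Matrix.single a b (-Complex.I)
        + Matrix.single b a Complex.I + Matrix.single b b 1) ∈ projSet n := by
      constructor
      · ext i j
        simp only [conjTranspose_apply, Matrix.smul_apply, Matrix.add_apply, Matrix.single,
          of_apply, smul_eq_mul, ite_and]
        split_ifs <;> simp_all <;> ring
      · have h2 : (Matrix.single a a (1:ℂ) + Matrix.single a b (-Complex.I)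
            + Matrix.single b a Complex.I + Matrix.single b b 1)
            * (Matrix.single a a 1 + Matrix.single a b (-Complex.I)
            + Matrix.single b a Complex.I + Matrix.single b b 1)
            = (Matrix.single a a 1 + Matrix.single a b (-Complex.I)
            + Matrix.single b a Complex.I + Matrix.single b b 1)
            + (Matrix.single a a 1 + Matrix.single a b (-Complex.I)
            + Matrix.single b a Complex.I + Matrix.single b b 1) := by
          simp only [mul_add, add_mul, Matrix.single_mul_single_same,
            Matrix.single_mul_single_of_ne, hab, hab', ne_eq, not_false_eq_true, one_mul,
            mul_one, neg_mul, mul_neg, Complex.I_mul_I, neg_neg]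
          abel
        rw [smul_mul_smul_comm, h2, smul_add]
        module
    have key : Matrix.single a b (1:ℂ) =
        ((1/2 : ℂ) • (Matrix.single a a 1 + Matrix.single a b 1
          + Matrix.single b a 1 + Matrix.single b b 1))
        + Complex.I • ((1/2 : ℂ) • (Matrix.single a a 1 + Matrix.single a b (-Complex.I)
          + Matrix.single b a Complex.I + Matrix.single b b 1))
        + (-(1+Complex.I)/2) • Matrix.single a a 1
        + (-(1+Complex.I)/2) • Matrix.single b b 1 := by
      ext i j
      simp only [Matrix.add_apply, Matrix.smul_apply, Matrix.single, of_apply, smul_eq_mul, ite_and]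
      split_ifs <;> simp_all <;> ring_nf <;> simp [Complex.I_sq] <;> ring
    rw [key]
    exact Submodule.add_mem _ (Submodule.add_mem _ (Submodule.add_mem _
      (Submodule.subset_span hSP) (Submodule.smul_mem _ _ (Submodule.subset_span hS'P)))
      (Submodule.smul_mem _ _ (Submodule.subset_span (Eaa_mem a))))
      (Submodule.smul_mem _ _ (Submodule.subset_span (Eaa_mem b)))

lemma mem_span_proj (M : Matrix n n ℂ) : M ∈ Submodule.span ℂ (projSet n) := by
  nth_rewrite 1 [matrix_eq_sum_single M]
  apply Submodule.sum_mem; intro a _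
  apply Submodule.sum_mem; intro b _
  have : Matrix.single a b (M a b) = M a b • Matrix.single a b (1:ℂ) := by simp
  rw [this]
  exact Submodule.smul_mem _ _ (E_mem a b)

end Stmt2Aux

/-- equation (7) of the paper.  For a unitary
`U : H_A ⊗ H_B → H_C ⊗ H_D`, there is a quantum influence from `A` to `D`
(some `M` on `A` and `N` on `D` have nonvanishing Heisenberg commutator) iff there is an
interference influence between some pair of projective decompositions on `A` and on `D`. -/


theorem stmt2 {A B C D : Type}
    [Fintype A] [DecidableEq A] [Fintype B] [DecidableEq B]
    [Fintype C] [DecidableEq C] [Fintype D] [DecidableEq D]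
    (U : Matrix (C × D) (A × B) ℂ) (hU : U * Uᴴ = 1 ∧ Uᴴ * U = 1) :
    (∃ (M : Matrix A A ℂ) (N : Matrix D D ℂ),
        (M ⊗ₖ (1 : Matrix B B ℂ)) * (Uᴴ * ((1 : Matrix C C ℂ) ⊗ₖ N) * U)
          ≠ (Uᴴ * ((1 : Matrix C C ℂ) ⊗ₖ N) * U) * (M ⊗ₖ (1 : Matrix B B ℂ)))
    ↔
    (∃ (PA : ProjDecompOn A) (PD : ProjDecompOn D) (i : PA.ι) (j : PD.ι),
        (PA.P i ⊗ₖ (1 : Matrix B B ℂ)) * (Uᴴ * ((1 : Matrix C C ℂ) ⊗ₖ PD.P j) * U)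
          ≠ (Uᴴ * ((1 : Matrix C C ℂ) ⊗ₖ PD.P j) * U) * (PA.P i ⊗ₖ (1 : Matrix B B ℂ))) := by
  constructor
  · intro hL
    by_contra hR
    push_neg at hR
    obtain ⟨M, N, hMN⟩ := hL
    apply hMN
    clear hMN
    -- from hR: commutation for all projections
    have hproj : ∀ P ∈ Stmt2Aux.projSet A, ∀ Q ∈ Stmt2Aux.projSet D,
        (P ⊗ₖ (1 : Matrix B B ℂ)) * (Uᴴ * ((1 : Matrix C C ℂ) ⊗ₖ Q) * U)
          = (Uᴴ * ((1 : Matrix C C ℂ) ⊗ₖ Q) * U) * (P ⊗ₖ (1 : Matrix B B ℂ)) := by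
      intro P hP Q hQ
      exact hR (Stmt2Aux.boolDecomp P hP) (Stmt2Aux.boolDecomp Q hQ) true true
    -- step 1: extend to all N, fixed projection P
    have step1 : ∀ P ∈ Stmt2Aux.projSet A, ∀ N' : Matrix D D ℂ,
        (P ⊗ₖ (1 : Matrix B B ℂ)) * (Uᴴ * ((1 : Matrix C C ℂ) ⊗ₖ N') * U)
          = (Uᴴ * ((1 : Matrix C C ℂ) ⊗ₖ N') * U) * (P ⊗ₖ (1 : Matrix B B ℂ)) := by
      intro P hP N'
      induction Stmt2Aux.mem_span_proj N' using Submodule.span_induction with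
      | mem Q hQ => exact hproj P hP Q hQ
      | zero => simp [Matrix.kronecker_zero]
      | add x y hx hy ihx ihy =>
        simp only [Matrix.kronecker_add, Matrix.mul_add, Matrix.add_mul, mul_add, add_mul]
        rw [ihx, ihy]
      | smul c x hx ihx =>
        simp only [Matrix.kronecker_smul, Matrix.smul_mul, Matrix.mul_smul, smul_mul_assoc, mul_smul_comm]
        rw [ihx]
    -- step 2: extend to all M
    have step2 : ∀ M' : Matrix A A ℂ, ∀ N' : Matrix D D ℂ,
        (M' ⊗ₖ (1 : Matrix B B ℂ)) * (Uᴴ * ((1 : Matrix C C ℂ) ⊗ₖ N') * U)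
          = (Uᴴ * ((1 : Matrix C C ℂ) ⊗ₖ N') * U) * (M' ⊗ₖ (1 : Matrix B B ℂ)) := by
      intro M'
      induction Stmt2Aux.mem_span_proj M' using Submodule.span_induction with
      | mem P hP => exact step1 P hP
      | zero => intro N'; simp [Matrix.zero_kronecker]
      | add x y hx hy ihx ihy =>
        intro N'
        simp only [Matrix.add_kronecker, Matrix.mul_add, Matrix.add_mul, mul_add, add_mul]
        rw [ihx N', ihy N']
      | smul c x hx ihx =>
        intro N'
        simp only [Matrix.smul_kronecker, Matrix.smul_mul, Matrix.mul_smul, smul_mul_assoc,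
          mul_smul_comm]
        rw [ihx N']
    exact step2 M N
  · rintro ⟨PA, PD, i, j, h⟩
    exact ⟨PA.P i, PD.P j, h⟩
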